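/- Let S ⊆ A be a set of alternatives and suppose a ∈ S minimizes the PAV-score decrease w_PAV(S) − w_PAV(S∖{·}) among all alternatives of S, with Δ = w_PAV(S) − w_PAV(S∖{a}) > 0. Then |S| ≤ n/Δ, where n is the number of voters. -/
import Mathlib


open Finset

/-- The PAV-score of a set `S` of alternatives: `∑_i ∑_{j=1}^{|A_i ∩ S|} 1/j`. -/
def pavScore {n m : ℕ} (App : Fin n → Finset (Fin m)) (S : Finset (Fin m)) : ℚ :=
  ∑ i, ∑ j ∈ Finset.range (App i ∩ S).card, (1 : ℚ) / (j + 1)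

theorem rev_seqpav_size_bound
    {n m : ℕ} (App : Fin n → Finset (Fin m)) (hApp : ∀ i, (App i).Nonempty)
    (S : Finset (Fin m)) (a : Fin m) (ha : a ∈ S)
    (hmin : ∀ b ∈ S, pavScore App S - pavScore App (S.erase a) ≤
      pavScore App S - pavScore App (S.erase b))
    (Δ : ℚ) (hΔ : Δ = pavScore App S - pavScore App (S.erase a)) (hpos : 0 < Δ) :
    (S.card : ℚ) ≤ (n : ℚ) / Δ := by
  have key : ∀ b ∈ S, pavScore App S - pavScore App (S.erase b)
      = ∑ i, if b ∈ App i ∩ S then (1:ℚ)/((App i ∩ S).card) else 0 := by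
    intro b hb
    unfold pavScore
    rw [← Finset.sum_sub_distrib]
    refine Finset.sum_congr rfl fun i _ => ?_
    rw [Finset.inter_erase]
    by_cases h : b ∈ App i ∩ S
    · obtain ⟨c, hc⟩ : ∃ c, (App i ∩ S).card = c + 1 := by
        have := Finset.card_pos.mpr ⟨b, h⟩
        exact ⟨(App i ∩ S).card - 1, by omega⟩
      rw [Finset.card_erase_of_mem h, hc, if_pos h]
      simp only [Nat.add_sub_cancel, Finset.sum_range_succ]
      push_cast
      ring
    · rw [Finset.erase_eq_of_notMem h, if_neg h, sub_self]
  have sum_bound : ∑ b ∈ S, (pavScore App S - pavScore App (S.erase b)) ≤ (n : ℚ) := by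
    calc ∑ b ∈ S, (pavScore App S - pavScore App (S.erase b))
        = ∑ b ∈ S, ∑ i, (if b ∈ App i ∩ S then (1:ℚ)/((App i ∩ S).card) else 0) :=
          Finset.sum_congr rfl key
      _ = ∑ i, ∑ b ∈ S, (if b ∈ App i ∩ S then (1:ℚ)/((App i ∩ S).card) else 0) :=
          Finset.sum_comm
      _ ≤ ∑ _i : Fin n, (1 : ℚ) := by
          refine Finset.sum_le_sum fun i _ => ?_
          rw [Finset.sum_ite_mem]
          have hSA : S ∩ (App i ∩ S) = App i ∩ S :=
            Finset.inter_eq_right.mpr Finset.inter_subset_right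
          rw [hSA, Finset.sum_const, nsmul_eq_mul]
          rcases Nat.eq_zero_or_pos (App i ∩ S).card with h0 | h0
          · simp [h0]
          · have : ((App i ∩ S).card : ℚ) ≠ 0 := by positivity
            rw [mul_one_div, div_self this]
      _ = (n : ℚ) := by simp
  have hlow : (S.card : ℚ) * Δ ≤ ∑ b ∈ S, (pavScore App S - pavScore App (S.erase b)) := by
    calc (S.card : ℚ) * Δ = ∑ _b ∈ S, Δ := by rw [Finset.sum_const, nsmul_eq_mul]
      _ ≤ _ := Finset.sum_le_sum fun b hb => hΔ ▸ hmin b hb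
  rw [le_div_iff₀ hpos]
  exact hlow.trans sum_bound
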